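/- Let Φ be a real n×m matrix and let σ > 0 satisfy σ‖v‖₂ ≤ ‖Φv‖₂ for all v ∈ ℝ^m. Suppose y = Φx + ε. Then for any index i with x_i ≠ 0 and any index set A ⊆ {1,…,m}: (min over z with supp(z) ⊆ A \ {i} of ‖y − Φz‖₂) ≥ σ·|x_i| − ‖ε‖₂. -/

import Mathlib

open Matrix

/-- The Euclidean (ℓ₂) norm of a finitely indexed real vector. -/
noncomputable def l2norm {ι : Type*} [Fintype ι] (v : ι → ℝ) : ℝ :=
  ‖(WithLp.equiv 2 (ι → ℝ)).symm v‖

/-- The restricted least-squares residual norm: the infimum of `‖y − Φz‖₂` over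
vectors `z` supported inside the index set `B`. -/
noncomputable def resNorm {n m : ℕ} (Φ : Matrix (Fin n) (Fin m) ℝ)
    (y : Fin n → ℝ) (B : Finset (Fin m)) : ℝ :=
  sInf {c : ℝ | ∃ z : Fin m → ℝ, (∀ l, z l ≠ 0 → l ∈ B) ∧ c = l2norm (y - Φ.mulVec z)}


lemma l2norm_coord {ι : Type*} [Fintype ι] (v : ι → ℝ) (i : ι) : |v i| ≤ l2norm v := by
  have := EuclideanSpace.norm_eq ((WithLp.equiv 2 (ι → ℝ)).symm v)
  rw [l2norm, this]
  have h1 : |v i| = Real.sqrt (‖v i‖ ^ 2) := by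
    rw [Real.sqrt_sq_eq_abs]; simp
  rw [h1]
  apply Real.sqrt_le_sqrt
  have := Finset.single_le_sum (f := fun j => ‖v j‖ ^ 2) (fun j _ => by positivity)
      (Finset.mem_univ i)
  simpa using this

lemma l2norm_add_le {ι : Type*} [Fintype ι] (v w : ι → ℝ) :
    l2norm (v + w) ≤ l2norm v + l2norm w := by
  simpa [l2norm] using norm_add_le ((WithLp.equiv 2 (ι → ℝ)).symm v)
    ((WithLp.equiv 2 (ι → ℝ)).symm w)

/-- if `σ > 0` is a lower singular-value bound for `Φ` and `y = Φx + ε`,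
then for any index `i` with `x i ≠ 0` and any active set `A`, the residual of the
least-squares problem restricted to `A \ {i}` is at least `σ·|x i| − ‖ε‖₂`. -/
theorem residual_lower_bound_after_deleting_true_atom {n m : ℕ}
    (Φ : Matrix (Fin n) (Fin m) ℝ)
    (σ : ℝ) (hσ : 0 < σ)
    (hlow : ∀ v : Fin m → ℝ, σ * l2norm v ≤ l2norm (Φ.mulVec v))
    (x : Fin m → ℝ) (ε : Fin n → ℝ) (y : Fin n → ℝ)
    (hy : y = Φ.mulVec x + ε)
    (i : Fin m) (hxi : x i ≠ 0) (A : Finset (Fin m)) :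
    σ * |x i| - l2norm ε ≤ resNorm Φ y (A.erase i) := by
  apply le_csInf
  · exact ⟨l2norm (y - Φ.mulVec 0), 0, fun l hl => absurd rfl hl, rfl⟩
  · rintro c ⟨z, hz, rfl⟩
    have hzi : z i = 0 := by
      by_contra h
      exact absurd (Finset.mem_erase.1 (hz i h)).1 (not_not.2 rfl)
    have key : y - Φ.mulVec z = Φ.mulVec (x - z) + ε := by
      rw [hy, Matrix.mulVec_sub]; abel
    have h1 : l2norm (Φ.mulVec (x - z)) ≤ l2norm (y - Φ.mulVec z) + l2norm ε := by
      have h2 : Φ.mulVec (x - z) = (y - Φ.mulVec z) + (-ε) := by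
        rw [key]; abel
      calc l2norm (Φ.mulVec (x - z)) ≤ l2norm (y - Φ.mulVec z) + l2norm (-ε) := by
            rw [h2]; exact l2norm_add_le _ _
        _ = l2norm (y - Φ.mulVec z) + l2norm ε := by
            simp [l2norm]
    have h3 : σ * |x i| ≤ l2norm (Φ.mulVec (x - z)) := by
      calc σ * |x i| = σ * |(x - z) i| := by simp [hzi]
        _ ≤ σ * l2norm (x - z) := by
            exact mul_le_mul_of_nonneg_left (l2norm_coord _ i) hσ.le
        _ ≤ l2norm (Φ.mulVec (x - z)) := hlow _
    linarith
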